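/- Let G be a finite group, H ≤ G a subgroup, x_1 = 1, x_2, …, x_s a complete set of representatives for the double cosets of H in G, and let V be an irreducible finite-dimensional complex representation of G whose character χ_V takes only rational values and which satisfies dim_ℂ V^H = 1. Then dim V · ∑_{i=1}^s |H ∩ x_i H x_i⁻¹| · χ_V(q_i)² = |G|, where q_i := (1/|H|) · ∑_{y ∈ Hx_iH} y. -/

import Mathlib

open scoped Classical

/-- The double coset `HxH` as a finset. -/
noncomputable def dosetFinset {G : Type*} [Group G] [Fintype G] (H : Subgroup G) (x : G) :
    Finset G :=
  {y : G | ∃ h ∈ H, ∃ h' ∈ H, y = h * x * h'}.toFinset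

/-- `|H ∩ xHx⁻¹|`. -/
noncomputable def interConjCard {G : Type*} [Group G] [Fintype G] (H : Subgroup G) (x : G) :
    ℕ :=
  Nat.card {g : G // g ∈ H ∧ ∃ h ∈ H, g = x * h * x⁻¹}

/-- The character of a finite-dimensional representation. -/
noncomputable def repChar {G V : Type*} [Group G] [AddCommGroup V] [Module ℂ V]
    (ρ : Representation ℂ G V) (g : G) : ℂ :=
  LinearMap.trace ℂ V (ρ g)

/-- Irreducibility: `V` is nonzero and has no proper nonzero `G`-invariant subspace. -/
def IsIrreducibleRep {G V : Type*} [Group G] [AddCommGroup V] [Module ℂ V]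
    (ρ : Representation ℂ G V) : Prop :=
  Nontrivial V ∧ ∀ W : Submodule ℂ V, (∀ g : G, ∀ v ∈ W, ρ g v ∈ W) → W = ⊥ ∨ W = ⊤

/-- The subspace `V^H` of `H`-fixed vectors. -/
def fixedSubmodule {G V : Type*} [Group G] [AddCommGroup V] [Module ℂ V]
    (ρ : Representation ℂ G V) (H : Subgroup G) : Submodule ℂ V where
  carrier := {v : V | ∀ h ∈ H, ρ h v = v}
  add_mem' := by
    intro a b ha hb h hh
    simp [map_add, ha h hh, hb h hh]
  zero_mem' := by
    intro h hh
    simp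
  smul_mem' := by
    intro c v hv h hh
    simp [map_smul, hv h hh]

section Aux

open scoped Matrix ComplexOrder

theorem schur_scalar {G V : Type*} [Group G] [AddCommGroup V] [Module ℂ V]
    [FiniteDimensional ℂ V]
    (ρ : Representation ℂ G V) (hirr : IsIrreducibleRep ρ)
    (f : Module.End ℂ V) (hf : ∀ g : G, ρ g * f = f * ρ g) :
    f = (LinearMap.trace ℂ V f / (Module.finrank ℂ V : ℂ)) • (1 : Module.End ℂ V) := by
  obtain ⟨hnt, hsub⟩ := hirr
  haveI := hnt
  obtain ⟨μ, hμ⟩ := Module.End.exists_eigenvalue f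
  have hinv : ∀ g : G, ∀ v ∈ Module.End.eigenspace f μ, ρ g v ∈ Module.End.eigenspace f μ := by
    intro g v hv
    rw [Module.End.mem_eigenspace_iff] at hv ⊢
    have := congrArg (fun T : Module.End ℂ V => T v) (hf g)
    simp only [Module.End.mul_apply] at this
    rw [← this, hv, map_smul]
  rcases hsub _ hinv with h | h
  · exact absurd h hμ
  · have hfv : ∀ v : V, f v = μ • v := by
      intro v
      have : v ∈ Module.End.eigenspace f μ := h ▸ Submodule.mem_top
      exact Module.End.mem_eigenspace_iff.mp this
    have hfeq : f = μ • (1 : Module.End ℂ V) := by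
      ext v; simpa using hfv v
    have hd : (Module.finrank ℂ V : ℂ) ≠ 0 := by
      exact_mod_cast Module.finrank_pos.ne'
    rw [hfeq, map_smul, LinearMap.trace_one]
    simp only [smul_eq_mul]
    rw [mul_div_assoc, div_self hd, mul_one]

theorem avg_conj {G V : Type*} [Group G] [Fintype G] [AddCommGroup V] [Module ℂ V]
    [FiniteDimensional ℂ V]
    (ρ : Representation ℂ G V) (hirr : IsIrreducibleRep ρ) (f : Module.End ℂ V) :
    ∑ g : G, ρ g * f * ρ g⁻¹
      = ((Fintype.card G : ℂ) * LinearMap.trace ℂ V f / (Module.finrank ℂ V : ℂ))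
          • (1 : Module.End ℂ V) := by
  set F : Module.End ℂ V := ∑ g : G, ρ g * f * ρ g⁻¹ with hF
  have hcomm : ∀ h : G, ρ h * F = F * ρ h := by
    intro h
    rw [hF, Finset.mul_sum, Finset.sum_mul]
    refine Fintype.sum_equiv (Equiv.mulLeft h) _ _ ?_
    intro g
    simp only [Equiv.coe_mulLeft]
    have hh : ρ h⁻¹ * ρ h = 1 := by rw [← map_mul, inv_mul_cancel, map_one]
    rw [mul_inv_rev, map_mul, map_mul]
    simp only [mul_assoc]
    rw [hh, mul_one]
  have htr : LinearMap.trace ℂ V F = (Fintype.card G : ℂ) * LinearMap.trace ℂ V f := by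
    rw [hF, map_sum]
    have : ∀ g : G, LinearMap.trace ℂ V (ρ g * f * ρ g⁻¹) = LinearMap.trace ℂ V f := by
      intro g
      rw [LinearMap.trace_mul_comm, ← mul_assoc, ← map_mul, inv_mul_cancel, map_one, one_mul]
    simp [this, Finset.sum_const, Finset.card_univ, mul_comm]
  rw [schur_scalar ρ ⟨hirr.1, hirr.2⟩ F hcomm, htr]

theorem orth_sum {G V : Type*} [Group G] [Fintype G] [AddCommGroup V] [Module ℂ V]
    [FiniteDimensional ℂ V]
    (ρ : Representation ℂ G V) (hirr : IsIrreducibleRep ρ) :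
    ∑ g : G, repChar ρ g * repChar ρ g⁻¹ = (Fintype.card G : ℂ) := by
  haveI := hirr.1
  set d := Module.finrank ℂ V with hd
  have hd0 : (d : ℂ) ≠ 0 := by exact_mod_cast Module.finrank_pos.ne'
  set b := Module.finBasis ℂ V with hb
  have htr : ∀ f : Module.End ℂ V,
      LinearMap.trace ℂ V f = ∑ i, b.repr (f (b i)) i := by
    intro f
    rw [LinearMap.trace_eq_matrix_trace ℂ b f]
    simp [Matrix.trace, Matrix.diag, LinearMap.toMatrix_apply]
  have key : ∀ i j : Fin d,
      ∑ g : G, b.repr (ρ g (b i)) i * b.repr (ρ g⁻¹ (b j)) j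
        = (Fintype.card G : ℂ) / d * (if i = j then 1 else 0) := by
    intro i j
    set e : Module.End ℂ V := dualTensorHom ℂ V V (b.coord j ⊗ₜ[ℂ] b i) with he
    have htre : LinearMap.trace ℂ V e = if i = j then 1 else 0 := by
      rw [he, LinearMap.trace_eq_contract_apply, contractLeft_apply, Module.Basis.coord_apply,
        Module.Basis.repr_self]
      simp [Finsupp.single_apply, eq_comm]
    have hF := avg_conj ρ hirr e
    have hap := congrArg (fun T : Module.End ℂ V => b.repr (T (b j)) i) hF
    simp only [LinearMap.sum_apply, map_sum, Finsupp.coe_finset_sum, Finset.sum_apply,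
      LinearMap.smul_apply, Module.End.one_apply, map_smul, Finsupp.smul_apply] at hap
    have hterm : ∀ g : G,
        b.repr ((ρ g * e * ρ g⁻¹) (b j)) i
          = b.repr (ρ g (b i)) i * b.repr (ρ g⁻¹ (b j)) j := by
      intro g
      rw [Module.End.mul_apply, Module.End.mul_apply, he, dualTensorHom_apply, map_smul,
        map_smul, Module.Basis.coord_apply]
      simp [mul_comm, smul_eq_mul]
    rw [Finset.sum_congr rfl fun g _ => hterm g] at hap
    rw [hap, htre, Module.Basis.repr_self, Finsupp.single_apply]
    by_cases hij : i = j <;> simp [hij, smul_eq_mul] <;> rfl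
  have hchar : ∀ g : G, repChar ρ g = ∑ i, b.repr (ρ g (b i)) i := fun g => htr (ρ g)
  calc ∑ g : G, repChar ρ g * repChar ρ g⁻¹
      = ∑ g : G, ∑ i, ∑ j, b.repr (ρ g (b i)) i * b.repr (ρ g⁻¹ (b j)) j := by
        refine Finset.sum_congr rfl fun g _ => ?_
        rw [hchar g, hchar g⁻¹, Finset.sum_mul_sum]
    _ = ∑ i, ∑ j, ∑ g : G, b.repr (ρ g (b i)) i * b.repr (ρ g⁻¹ (b j)) j := by
        rw [Finset.sum_comm]
        refine Finset.sum_congr rfl fun i _ => Finset.sum_comm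
    _ = ∑ i : Fin d, ∑ j : Fin d, (Fintype.card G : ℂ) / d * (if i = j then 1 else 0) := by
        refine Finset.sum_congr rfl fun i _ => Finset.sum_congr rfl fun j _ => key i j
    _ = (Fintype.card G : ℂ) := by
        simp only [mul_ite, mul_one, mul_zero, Finset.sum_ite_eq, Finset.mem_univ, if_true]
        rw [Finset.sum_const, Finset.card_univ, Fintype.card_fin, nsmul_eq_mul]
        field_simp

theorem char_inv_conj {G V : Type*} [Group G] [Fintype G] [AddCommGroup V] [Module ℂ V]
    [FiniteDimensional ℂ V] (ρ : Representation ℂ G V) (g : G) :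
    repChar ρ g⁻¹ = starRingEnd ℂ (repChar ρ g) := by
  set b := Module.finBasis ℂ V with hb
  set N : G → Matrix (Fin (Module.finrank ℂ V)) (Fin (Module.finrank ℂ V)) ℂ :=
    fun g => LinearMap.toMatrix b b (ρ g) with hN
  have hNmul : ∀ g h : G, N (g * h) = N g * N h := by
    intro g h
    rw [hN]
    simp only [map_mul ρ]
    exact LinearMap.toMatrix_comp b b b (ρ g) (ρ h)
  have hNone : N 1 = 1 := by
    rw [hN]; simp only [map_one]; exact LinearMap.toMatrix_one b
  have htr : ∀ g : G, repChar ρ g = Matrix.trace (N g) := fun g =>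
    LinearMap.trace_eq_matrix_trace ℂ b (ρ g)
  set B : Matrix (Fin (Module.finrank ℂ V)) (Fin (Module.finrank ℂ V)) ℂ :=
    ∑ g : G, (N g)ᴴ * N g with hB
  have hBsd : B.PosSemidef := by
    rw [hB]
    refine Finset.sum_induction _ _ (fun a b ha hb => ha.add hb) Matrix.PosSemidef.zero ?_
    intro g _
    exact Matrix.posSemidef_conjTranspose_mul_self (N g)
  have hBpd : B.PosDef := by
    have h1 : B = (N 1)ᴴ * N 1 + ∑ g ∈ Finset.univ.erase 1, (N g)ᴴ * N g := by
      rw [hB, ← Finset.add_sum_erase _ _ (Finset.mem_univ 1)]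
    rw [h1, hNone]
    simp only [Matrix.conjTranspose_one, mul_one]
    refine Matrix.PosDef.add_posSemidef Matrix.PosDef.one ?_
    refine Finset.sum_induction _ _ (fun a b ha hb => ha.add hb) Matrix.PosSemidef.zero ?_
    intro g _
    exact Matrix.posSemidef_conjTranspose_mul_self (N g)
  obtain ⟨C, hC2, hCH⟩ : ∃ C : Matrix (Fin (Module.finrank ℂ V)) (Fin (Module.finrank ℂ V)) ℂ,
      C * C = B ∧ Cᴴ = C := by
    open scoped MatrixOrder in
    exact ⟨CFC.sqrt B, CFC.sqrt_mul_sqrt_self B hBsd.nonneg,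
      (CFC.sqrt_nonneg B).isSelfAdjoint.star_eq⟩
  have hdetC : IsUnit C.det := by
    have hCC : C.det * C.det = B.det := by rw [← Matrix.det_mul, hC2]
    have hBdet : B.det ≠ 0 := hBpd.det_pos.ne'
    refine isUnit_iff_ne_zero.mpr fun h => hBdet ?_
    rw [← hCC, h, mul_zero]
  have hCi : C * C⁻¹ = 1 := Matrix.mul_nonsing_inv C hdetC
  have hiC : C⁻¹ * C = 1 := Matrix.nonsing_inv_mul C hdetC
  have hBinv : ∀ g : G, (N g)ᴴ * B * N g = B := by
    intro g
    rw [hB, Finset.mul_sum, Finset.sum_mul]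
    refine Fintype.sum_equiv (Equiv.mulRight g) _ _ ?_
    intro h
    simp only [Equiv.coe_mulRight]
    rw [hNmul h g, Matrix.conjTranspose_mul]
    noncomm_ring
  set K : G → _ := fun g => C * N g * C⁻¹ with hK
  have hKu : ∀ g : G, (K g)ᴴ * K g = 1 := by
    intro g
    rw [hK]
    simp only [Matrix.conjTranspose_mul, Matrix.conjTranspose_nonsing_inv, hCH]
    calc C⁻¹ * ((N g)ᴴ * C) * (C * N g * C⁻¹)
        = C⁻¹ * ((N g)ᴴ * (C * C) * N g) * C⁻¹ := by noncomm_ring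
      _ = C⁻¹ * B * C⁻¹ := by rw [hC2, hBinv g]
      _ = 1 := by rw [← hC2, ← mul_assoc, hiC, one_mul, hCi]
  have hKi : ∀ g : G, K g⁻¹ * K g = 1 := by
    intro g
    rw [hK]
    calc C * N g⁻¹ * C⁻¹ * (C * N g * C⁻¹)
        = C * N g⁻¹ * (C⁻¹ * C) * N g * C⁻¹ := by noncomm_ring
      _ = C * (N g⁻¹ * N g) * C⁻¹ := by rw [hiC]; noncomm_ring
      _ = 1 := by rw [← hNmul, inv_mul_cancel, hNone, mul_one, hCi]
  have hKH : ∀ g : G, K g⁻¹ = (K g)ᴴ := by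
    intro g
    rw [← Matrix.inv_eq_left_inv (hKi g), ← Matrix.inv_eq_left_inv (hKu g)]
  have htrK : ∀ g : G, Matrix.trace (K g) = Matrix.trace (N g) := by
    intro g
    rw [hK, Matrix.trace_mul_cycle, hiC, one_mul]
  calc repChar ρ g⁻¹ = Matrix.trace (N g⁻¹) := htr g⁻¹
    _ = Matrix.trace (K g⁻¹) := (htrK g⁻¹).symm
    _ = Matrix.trace (K g)ᴴ := by rw [hKH g]
    _ = starRingEnd ℂ (Matrix.trace (K g)) := Matrix.trace_conjTranspose (K g)
    _ = starRingEnd ℂ (repChar ρ g) := by rw [htrK g, htr g]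

lemma mem_dosetFinset {G : Type*} [Group G] [Fintype G] (H : Subgroup G) (x y : G) :
    y ∈ dosetFinset H x ↔ ∃ h ∈ H, ∃ h' ∈ H, y = h * x * h' := by
  simp [dosetFinset, Set.mem_toFinset]

lemma doset_fiber_card {G : Type*} [Group G] [Fintype G] (H : Subgroup G) (x g y : G)
    (hg : g ∈ dosetFinset H x) (hy : y ∈ dosetFinset H x) :
    (Finset.univ.filter (fun p : H × H => (p.1 : G) * g * (p.2 : G) = y)).card
      = interConjCard H x := by
  obtain ⟨a, ha, b, hb, hgab⟩ := (mem_dosetFinset H x g).mp hg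
  obtain ⟨u, hu, v, hv, hyuv⟩ := (mem_dosetFinset H x y).mp hy
  rw [← Fintype.card_subtype, interConjCard, ← Nat.card_eq_fintype_card]
  refine Nat.card_congr ?_
  refine
    { toFun := fun p =>
        ⟨a⁻¹ * (p.1.1 : G)⁻¹ * u, ?_, b * (p.1.2 : G) * v⁻¹, ?_, ?_⟩
      invFun := fun k =>
        ⟨(⟨u * (k : G)⁻¹ * a⁻¹, ?_⟩, ⟨b⁻¹ * (x⁻¹ * (k : G) * x) * v, ?_⟩), ?_⟩
      left_inv := ?_
      right_inv := ?_ }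
  · exact mul_mem (mul_mem (inv_mem ha) (inv_mem p.1.1.2)) hu
  · exact mul_mem (mul_mem hb p.1.2.2) (inv_mem hv)
  · obtain ⟨⟨h, h'⟩, hp⟩ := p
    show a⁻¹ * (h : G)⁻¹ * u = x * (b * (h' : G) * v⁻¹) * x⁻¹
    have hp' : (h : G) * g * (h' : G) = u * x * v := by rw [← hyuv]; exact hp
    have hu' : u = (h : G) * g * (h' : G) * v⁻¹ * x⁻¹ := by rw [hp']; group
    rw [hu', hgab]; group
  · exact mul_mem (mul_mem hu (inv_mem k.2.1)) (inv_mem ha)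
  · refine mul_mem (mul_mem (inv_mem hb) ?_) hv
    obtain ⟨m, hm, hkm⟩ := k.2.2
    have : x⁻¹ * (k : G) * x = m := by rw [hkm]; group
    rw [this]; exact hm
  · rw [hgab, hyuv]; group
  · rintro ⟨⟨h, h'⟩, hp⟩
    have hp' : (h : G) * g * (h' : G) = u * x * v := by rw [← hyuv]; exact hp
    have hu' : u = (h : G) * g * (h' : G) * v⁻¹ * x⁻¹ := by rw [hp']; group
    refine Subtype.ext (Prod.ext (Subtype.ext ?_) (Subtype.ext ?_))
    · show u * (a⁻¹ * (h : G)⁻¹ * u)⁻¹ * a⁻¹ = (h : G)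
      group
    · show b⁻¹ * (x⁻¹ * (a⁻¹ * (h : G)⁻¹ * u) * x) * v = (h' : G)
      rw [hu', hgab]; group
  · rintro ⟨k, hk1, hk2⟩
    refine Subtype.ext ?_
    show a⁻¹ * (u * k⁻¹ * a⁻¹)⁻¹ * u = k
    group

lemma doset_image {G : Type*} [Group G] [Fintype G] (H : Subgroup G) (x g : G)
    (hg : g ∈ dosetFinset H x) :
    Finset.univ.image (fun p : H × H => (p.1 : G) * g * (p.2 : G)) = dosetFinset H x := by
  obtain ⟨a, ha, b, hb, hgab⟩ := (mem_dosetFinset H x g).mp hg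
  ext y
  simp only [Finset.mem_image, Finset.mem_univ, true_and, mem_dosetFinset]
  constructor
  · rintro ⟨⟨h, h'⟩, rfl⟩
    exact ⟨(h : G) * a, mul_mem h.2 ha, b * (h' : G), mul_mem hb h'.2, by rw [hgab]; group⟩
  · rintro ⟨u, hu, v, hv, rfl⟩
    refine ⟨(⟨u * a⁻¹, mul_mem hu (inv_mem ha)⟩, ⟨b⁻¹ * v, mul_mem (inv_mem hb) hv⟩), ?_⟩
    show u * a⁻¹ * g * (b⁻¹ * v) = u * x * v
    rw [hgab]; group

lemma sum_pairs_doset {G M : Type*} [Group G] [Fintype G] [AddCommMonoid M]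
    (H : Subgroup G) (x g : G) (hg : g ∈ dosetFinset H x) (f : G → M) :
    ∑ p : H × H, f ((p.1 : G) * g * (p.2 : G))
      = interConjCard H x • ∑ y ∈ dosetFinset H x, f y := by
  rw [Finset.sum_comp f (fun p : H × H => (p.1 : G) * g * (p.2 : G)), doset_image H x g hg,
    Finset.smul_sum]
  refine Finset.sum_congr rfl fun y hy => ?_
  rw [doset_fiber_card H x g y hg hy]

end Aux
section Part2

lemma rank_one_scalar {V : Type*} [AddCommGroup V] [Module ℂ V] [FiniteDimensional ℂ V]
    {S : Submodule ℂ V} {P : Module.End ℂ V} (hProj : LinearMap.IsProj S P)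
    (hS : Module.finrank ℂ S = 1)
    (A : Module.End ℂ V) (hA : P * A * P = A) :
    A = (LinearMap.trace ℂ V A) • P := by
  have htrP : LinearMap.trace ℂ V P = 1 := by
    rw [hProj.trace, hS, Nat.cast_one]
  obtain ⟨v₀, hv₀, hsp⟩ := finrank_eq_one_iff'.mp hS
  set w : V := (v₀ : V) with hwdef
  have hw : w ∈ S := v₀.2
  have hPw : P w = w := hProj.2 w hw
  have hAw_mem : A w ∈ S := by
    rw [← hA]
    exact hProj.1 _
  obtain ⟨cA, hcA⟩ := hsp ⟨A w, hAw_mem⟩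
  have hcA' : A w = cA • w := by
    have := congrArg (Subtype.val) hcA
    simpa using this.symm
  have hall : ∀ v : V, A v = cA • P v := by
    intro v
    obtain ⟨t, ht⟩ := hsp ⟨P v, hProj.1 v⟩
    have ht' : P v = t • w := by
      have := congrArg (Subtype.val) ht
      simpa using this.symm
    have hstep : A v = P (A (P v)) := by
      conv_lhs => rw [← hA]
      rfl
    calc A v = P (A (P v)) := hstep
      _ = P (A (t • w)) := by rw [ht']
      _ = t • P (A w) := by rw [map_smul, map_smul]
      _ = t • P (cA • w) := by rw [hcA']
      _ = t • cA • P w := by rw [map_smul]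
      _ = t • cA • w := by rw [hPw]
      _ = cA • P v := by rw [ht', smul_comm]
  have hAeq : A = cA • P := by
    ext v; simpa using hall v
  have htrA : LinearMap.trace ℂ V A = cA := by
    rw [hAeq, map_smul, htrP, smul_eq_mul, mul_one]
  rw [htrA]
  exact hAeq

/-- If `V` is irreducible with rational-valued character and `dim V^H = 1`, then
`dim V · ∑_i |H ∩ x_i H x_i⁻¹| · χ_V(q_i)² = |G|`, where
`χ_V(q_i) = (1/|H|) ∑_{y ∈ H x_i H} χ_V(y)`. -/
theorem hecke_orthogonality_rat_char {G V : Type*} [Group G] [Fintype G]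
    [AddCommGroup V] [Module ℂ V] [FiniteDimensional ℂ V]
    (ρ : Representation ℂ G V) (hirr : IsIrreducibleRep ρ)
    (hrat : ∀ g : G, ∃ q : ℚ, repChar ρ g = (q : ℂ))
    (H : Subgroup G) (hfix : Module.finrank ℂ (fixedSubmodule ρ H) = 1)
    (s : ℕ) (hs : 0 < s) (x : Fin s → G) (hx1 : x ⟨0, hs⟩ = 1)
    (hreps : ∀ g : G, ∃! i : Fin s, ∃ h ∈ H, ∃ h' ∈ H, g = h * x i * h') :
    (Module.finrank ℂ V : ℂ) *
        ∑ i : Fin s,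
          (interConjCard H (x i) : ℂ) *
            ((Nat.card H : ℂ)⁻¹ * ∑ y ∈ dosetFinset H (x i), repChar ρ y) ^ 2
      = (Fintype.card G : ℂ) := by
  haveI hnt : Nontrivial V := hirr.1
  have hd0 : ((Module.finrank ℂ V : ℂ)) ≠ 0 := by exact_mod_cast Module.finrank_pos.ne'
  have hH0 : ((Nat.card H : ℂ)) ≠ 0 := by
    have : Nat.card H ≠ 0 := Nat.card_pos.ne'
    exact_mod_cast this
  -- the averaging projection onto the H-fixed vectors
  set P : Module.End ℂ V := (Nat.card H : ℂ)⁻¹ • ∑ h : H, ρ (h : G) with hPdef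
  clear_value P
  have hPleft : ∀ h : G, h ∈ H → ρ h * P = P := by
    intro h hh
    rw [hPdef, mul_smul_comm, Finset.mul_sum]
    congr 1
    refine Fintype.sum_equiv (Equiv.mulLeft (⟨h, hh⟩ : H)) _ _ ?_
    intro k
    show ρ h * ρ (k : G) = ρ (((⟨h, hh⟩ : H) * k : H) : G)
    rw [Subgroup.coe_mul, map_mul]
  have hPP : P * P = P := by
    nth_rewrite 1 [hPdef]
    rw [smul_mul_assoc, Finset.sum_mul]
    rw [Finset.sum_congr rfl fun (h : H) _ => hPleft (h : G) h.2]
    rw [Finset.sum_const, Finset.card_univ, ← Nat.card_eq_fintype_card,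
      ← Nat.cast_smul_eq_nsmul ℂ, smul_smul, inv_mul_cancel₀ hH0, one_smul]
  have hPfix : ∀ v : V, P v ∈ fixedSubmodule ρ H := by
    intro v h hh
    have := congrArg (fun T : Module.End ℂ V => T v) (hPleft h hh)
    simpa [Module.End.mul_apply] using this
  have hPid : ∀ v ∈ fixedSubmodule ρ H, P v = v := by
    intro v hv
    rw [hPdef]
    simp only [LinearMap.smul_apply, LinearMap.coe_sum, Finset.sum_apply]
    rw [Finset.sum_congr rfl fun (h : H) _ => hv (h : G) h.2]
    rw [Finset.sum_const, Finset.card_univ, ← Nat.card_eq_fintype_card,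
      ← Nat.cast_smul_eq_nsmul ℂ, smul_smul, inv_mul_cancel₀ hH0, one_smul]
  have hProj : LinearMap.IsProj (fixedSubmodule ρ H) P := ⟨hPfix, hPid⟩
  have htrP : LinearMap.trace ℂ V P = 1 := by
    rw [hProj.trace, hfix, Nat.cast_one]
  have hPne : P ≠ 0 := by
    intro h0
    rw [h0, map_zero] at htrP
    exact zero_ne_one htrP
  -- the double-coset average of ρ g
  have hPgP : ∀ (i : Fin s), ∀ g ∈ dosetFinset H (x i),
      P * ρ g * P = ((interConjCard H (x i) : ℂ) * (Nat.card H : ℂ)⁻¹ * (Nat.card H : ℂ)⁻¹)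
        • ∑ y ∈ dosetFinset H (x i), ρ y := by
    intro i g hg
    have expand : P * ρ g * P
        = ((Nat.card H : ℂ)⁻¹ * (Nat.card H : ℂ)⁻¹)
            • ∑ p : H × H, ρ ((p.1 : G) * g * (p.2 : G)) := by
      rw [hPdef, smul_mul_assoc, smul_mul_assoc, mul_smul_comm, smul_smul]
      congr 1
      rw [Finset.sum_mul, Finset.sum_mul_sum, Fintype.sum_prod_type]
      refine Finset.sum_congr rfl fun h _ => Finset.sum_congr rfl fun h' _ => ?_
      rw [map_mul, map_mul]
    rw [expand, sum_pairs_doset H (x i) g hg (fun y => ρ y),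
      ← Nat.cast_smul_eq_nsmul ℂ, smul_smul]
    congr 1
    ring
  -- the element T = ∑ χ(g) ρ(g)
  set T : Module.End ℂ V := ∑ g : G, repChar ρ g • ρ g with hTdef
  clear_value T
  have hTcomm : ∀ h : G, ρ h * T = T * ρ h := by
    intro h
    rw [hTdef, Finset.mul_sum, Finset.sum_mul]
    refine Fintype.sum_equiv ((Equiv.mulRight h⁻¹).trans (Equiv.mulLeft h)) _ _ ?_
    intro g
    simp only [Equiv.trans_apply, Equiv.coe_mulLeft, Equiv.coe_mulRight]
    rw [mul_smul_comm, smul_mul_assoc]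
    have h1 : ρ (h * (g * h⁻¹)) * ρ h = ρ h * ρ g := by
      rw [← map_mul, ← map_mul]
      congr 1
      group
    have h2 : repChar ρ (h * (g * h⁻¹)) = repChar ρ g := by
      show LinearMap.trace ℂ V (ρ (h * (g * h⁻¹))) = LinearMap.trace ℂ V (ρ g)
      rw [map_mul, LinearMap.trace_mul_comm, ← map_mul]
      have hgh : g * h⁻¹ * h = g := by group
      rw [hgh]
    rw [h1, h2]
  have hTval : T = ((Fintype.card G : ℂ) / (Module.finrank ℂ V : ℂ)) • 1 := by
    have hsch := schur_scalar ρ hirr T hTcomm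
    have htrT : LinearMap.trace ℂ V T = (Fintype.card G : ℂ) := by
      rw [hTdef, map_sum]
      have hterm : ∀ g : G,
          LinearMap.trace ℂ V (repChar ρ g • ρ g) = repChar ρ g * repChar ρ g⁻¹ := by
        intro g
        rw [map_smul, smul_eq_mul]
        congr 1
        show repChar ρ g = repChar ρ g⁻¹
        obtain ⟨q, hq⟩ := hrat g
        rw [char_inv_conj ρ g, hq, map_ratCast]
      rw [Finset.sum_congr rfl fun g _ => hterm g]
      exact orth_sum ρ hirr
    rw [htrT] at hsch
    exact hsch
  have hPTP : P * T * P = ((Fintype.card G : ℂ) / (Module.finrank ℂ V : ℂ)) • P := by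
    rw [hTval, mul_smul_comm, smul_mul_assoc, mul_one, hPP]
  -- the double-coset decomposition of P * T * P
  set idx : G → Fin s := fun g => (hreps g).exists.choose with hidxdef
  have hmem : ∀ g : G, g ∈ dosetFinset H (x (idx g)) := fun g =>
    (mem_dosetFinset _ _ _).mpr (hreps g).exists.choose_spec
  have huniq : ∀ g (i : Fin s), g ∈ dosetFinset H (x i) → idx g = i := by
    intro g i hgi
    exact (hreps g).unique (hreps g).exists.choose_spec ((mem_dosetFinset _ _ _).mp hgi)
  have hfil : ∀ i : Fin s, dosetFinset H (x i) = Finset.univ.filter (fun g => idx g = i) := by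
    intro i
    ext g
    simp only [Finset.mem_filter, Finset.mem_univ, true_and]
    constructor
    · exact fun hgi => huniq g i hgi
    · rintro rfl
      exact hmem g
  have hbig : P * T * P
      = (∑ i : Fin s,
          (interConjCard H (x i) : ℂ) *
            ((Nat.card H : ℂ)⁻¹ * ∑ y ∈ dosetFinset H (x i), repChar ρ y) ^ 2) • P := by
    calc P * T * P = ∑ g : G, repChar ρ g • (P * ρ g * P) := by
          rw [hTdef, Finset.mul_sum, Finset.sum_mul]
          refine Finset.sum_congr rfl fun g _ => ?_
          rw [mul_smul_comm, smul_mul_assoc]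
      _ = ∑ i : Fin s, ∑ g ∈ dosetFinset H (x i), repChar ρ g • (P * ρ g * P) := by
          rw [Finset.sum_congr rfl fun (i : Fin s) _ => by rw [hfil i]]
          exact (Finset.sum_fiberwise_of_maps_to (fun g _ => Finset.mem_univ (idx g)) _).symm
      _ = ∑ i : Fin s,
            ((interConjCard H (x i) : ℂ) *
              ((Nat.card H : ℂ)⁻¹ * ∑ y ∈ dosetFinset H (x i), repChar ρ y) ^ 2) • P := by
          refine Finset.sum_congr rfl fun i _ => ?_
          have hconst : ∀ g ∈ dosetFinset H (x i),
              repChar ρ g • (P * ρ g * P)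
                = (repChar ρ g *
                    ((interConjCard H (x i) : ℂ) * (Nat.card H : ℂ)⁻¹ *
                      ((Nat.card H : ℂ)⁻¹ * ∑ y ∈ dosetFinset H (x i), repChar ρ y))) • P := by
            intro g hg
            have h2 : P * (P * ρ g * P) * P = P * ρ g * P := by
              calc P * (P * ρ g * P) * P = P * P * ρ g * (P * P) := by noncomm_ring
                _ = P * ρ g * P := by rw [hPP]
            have h3 := rank_one_scalar hProj hfix (P * ρ g * P) h2
            have h4 : LinearMap.trace ℂ V (P * ρ g * P)
                = (interConjCard H (x i) : ℂ) * (Nat.card H : ℂ)⁻¹ *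
                    ((Nat.card H : ℂ)⁻¹ * ∑ y ∈ dosetFinset H (x i), repChar ρ y) := by
              rw [hPgP i g hg, map_smul, map_sum, smul_eq_mul]
              show (interConjCard H (x i) : ℂ) * (Nat.card H : ℂ)⁻¹ * (Nat.card H : ℂ)⁻¹ *
                  (∑ y ∈ dosetFinset H (x i), repChar ρ y) = _
              ring
            rw [h3, h4, smul_smul]
          rw [Finset.sum_congr rfl hconst, ← Finset.sum_smul, ← Finset.sum_mul]
          congr 1
          ring
      _ = (∑ i : Fin s,
            (interConjCard H (x i) : ℂ) *
              ((Nat.card H : ℂ)⁻¹ * ∑ y ∈ dosetFinset H (x i), repChar ρ y) ^ 2) • P :=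
          (Finset.sum_smul).symm
  have hsc : (Fintype.card G : ℂ) / (Module.finrank ℂ V : ℂ)
      = ∑ i : Fin s,
          (interConjCard H (x i) : ℂ) *
            ((Nat.card H : ℂ)⁻¹ * ∑ y ∈ dosetFinset H (x i), repChar ρ y) ^ 2 := by
    have h0 : ((Fintype.card G : ℂ) / (Module.finrank ℂ V : ℂ)
        - ∑ i : Fin s,
            (interConjCard H (x i) : ℂ) *
              ((Nat.card H : ℂ)⁻¹ * ∑ y ∈ dosetFinset H (x i), repChar ρ y) ^ 2) • P = 0 := by
      rw [sub_smul, ← hPTP, hbig, sub_self]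
    rcases smul_eq_zero.mp h0 with h | h
    · exact sub_eq_zero.mp h
    · exact absurd h hPne
  rw [← hsc, mul_comm, div_mul_cancel₀ _ hd0]

end Part2
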